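/- Let a ∈ ℝ and define g(x) = (1-x)·(ln(x/(1-x)) + a) for 0 < x < 1. Then g attains its unique maximum at x* = e^{W(e^{a-1})+1-a}/(e^{W(e^{a-1})+1-a} + 1), where W is the principal Lambert W function. -/

import Mathlib

/-- For `a ∈ ℝ`, `g x = (1-x)*(log (x/(1-x)) + a)` attains its unique maximum
on `(0,1)` at `x* = e^{W(e^{a-1})+1-a}/(e^{W(e^{a-1})+1-a} + 1)`, where `w = W(e^{a-1})`
is the principal Lambert W value, i.e. `w * e^w = e^{a-1}` with `w ≥ 0`. -/
theorem stmt_8 (a : ℝ) (w : ℝ) (hw : w * Real.exp w = Real.exp (a - 1)) (hw' : 0 ≤ w) :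
    Real.exp (w + 1 - a) / (Real.exp (w + 1 - a) + 1) ∈ Set.Ioo (0:ℝ) 1 ∧
    ∀ x ∈ Set.Ioo (0:ℝ) 1,
      x ≠ Real.exp (w + 1 - a) / (Real.exp (w + 1 - a) + 1) →
      (1 - x) * (Real.log (x / (1 - x)) + a) <
        (1 - Real.exp (w + 1 - a) / (Real.exp (w + 1 - a) + 1)) *
          (Real.log ((Real.exp (w + 1 - a) / (Real.exp (w + 1 - a) + 1)) /
            (1 - Real.exp (w + 1 - a) / (Real.exp (w + 1 - a) + 1))) + a) := by
  set E := Real.exp (w + 1 - a) with hE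
  have hE0 : 0 < E := Real.exp_pos _
  have hden : (0:ℝ) < E + 1 := by linarith
  have hx0 : 0 < E / (E + 1) := div_pos hE0 hden
  have hx1 : E / (E + 1) < 1 := by rw [div_lt_one hden]; linarith
  have h1mx : 1 - E / (E + 1) = 1 / (E + 1) := by field_simp; ring
  have hratio : (E / (E + 1)) / (1 - E / (E + 1)) = E := by
    rw [h1mx]; field_simp
  have hlog : Real.log ((E / (E + 1)) / (1 - E / (E + 1))) = w + 1 - a := by
    rw [hratio, hE, Real.log_exp]
  -- key: w * E = 1
  have hwE : w * E = 1 := by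
    have : w * E = (w * Real.exp w) * Real.exp (1 - a) := by
      rw [hE, mul_assoc, ← Real.exp_add]; ring_nf
    rw [this, hw, ← Real.exp_add]
    simp
  refine ⟨⟨hx0, hx1⟩, ?_⟩
  rintro x ⟨hx0', hx1'⟩ hne
  rw [hlog, h1mx]
  have h1x : (0:ℝ) < 1 - x := by linarith
  have hq : 0 < x / (1 - x) := div_pos hx0' h1x
  set t := Real.log (x / (1 - x)) with ht
  have het : Real.exp t = x / (1 - x) := Real.exp_log hq
  have het1 : Real.exp t + 1 = 1 / (1 - x) := by
    rw [het]; field_simp; ring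
  have h1x' : 1 - x = 1 / (Real.exp t + 1) := by
    rw [het1]; field_simp
  have hte : t ≠ w + 1 - a := by
    intro h
    apply hne
    have : x / (1 - x) = E := by rw [← het, h, hE]
    have hx : x = E * (1 - x) := by
      field_simp at this; linarith [this]
    field_simp
    linarith
  set s := t - (w + 1 - a) with hs
  have hs0 : s ≠ 0 := fun h => hte (by linarith [sub_eq_zero.mp h])
  have hexp : 1 + s < Real.exp s := by
    have := Real.add_one_lt_exp hs0
    linarith
  have hets : Real.exp t = E * Real.exp s := by
    rw [hE, ← Real.exp_add]; congr 1; rw [hs]; ring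
  have hEs : 0 < Real.exp s := Real.exp_pos _
  have hkey : (t + a) * (E + 1) < (w + 1) * (Real.exp t + 1) := by
    have ht' : t = s + w + 1 - a := by rw [hs]; ring
    rw [hets, ht']
    have h1 : (w + 1) * E * (1 + s) < (w + 1) * E * Real.exp s := by
      apply mul_lt_mul_of_pos_left hexp
      positivity
    nlinarith [hwE]
  have hetpos : 0 < Real.exp t + 1 := by positivity
  have goal1 : (t + a) / (Real.exp t + 1) < (w + 1) / (E + 1) := by
    rw [div_lt_div_iff₀ hetpos hden]
    linarith
  calc (1 - x) * (t + a) = (t + a) / (Real.exp t + 1) := by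
        rw [h1x']; ring
    _ < (w + 1) / (E + 1) := goal1
    _ = 1 / (E + 1) * (w + 1 - a + a) := by ring
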